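/- Let α be a finite type, let g : α → α → Bool be regular with respect to a subgroup S of Equiv.Perm α × Equiv.Perm α, let m be the cardinality of S and fix an enumeration e : Fin m ≃ S. Fix n and a, b : Fin n → α. Then the set of values of the Unfold map, namely { Unfold(a,b)(I) : I ∈ (Fin n → Fin m) }, equals the product of fibers { (a', b') : (Fin n → α) × (Fin n → α) | ∀ i, g (a' i) (b' i) = g (a i) (b i) }. -/
import Mathlib


/-- A bipartite Boolean function `g` is regular with respect to a subgroup `S` of
`Equiv.Perm α × Equiv.Perm α` if the coordinatewise action of `S` preserves `g` and `S`
acts simply transitively on each fiber of `g`. -/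
def IsRegularGadget {α : Type*} (g : α → α → Bool)
    (S : Subgroup (Equiv.Perm α × Equiv.Perm α)) : Prop :=
  (∀ s ∈ S, ∀ x y : α, g (s.1 x) (s.2 y) = g x y) ∧
  (∀ x₁ y₁ x₂ y₂ : α, g x₁ y₁ = g x₂ y₂ →
    ∃! s : S, ((s : Equiv.Perm α × Equiv.Perm α).1 x₁,
               (s : Equiv.Perm α × Equiv.Perm α).2 y₁) = (x₂, y₂))

/-- The `Unfold` map: given an enumeration `e : Fin m ≃ S` of the symmetry group and an
input `(a, b)` to `g^n`, it sends an index tuple `I : Fin n → Fin m` to the input to `g^n`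
obtained by applying the `I i`-th symmetry in the `i`-th coordinate. -/
def Unfold {α : Type*} {S : Subgroup (Equiv.Perm α × Equiv.Perm α)} {m n : ℕ}
    (e : Fin m ≃ S) (a b : Fin n → α) (I : Fin n → Fin m) :
    (Fin n → α) × (Fin n → α) :=
  (fun i => (e (I i) : Equiv.Perm α × Equiv.Perm α).1 (a i),
   fun i => (e (I i) : Equiv.Perm α × Equiv.Perm α).2 (b i))

/-- Claim (i): the set of values of `Unfold (a, b)` is exactly the product of the fibers
`g⁻¹(g (aᵢ) (bᵢ))`, i.e. the set of all `(a', b')` encoding the same string as `(a, b)`. -/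
theorem range_unfold {α : Type*} [Fintype α]
    (g : α → α → Bool) (S : Subgroup (Equiv.Perm α × Equiv.Perm α))
    (hreg : IsRegularGadget g S) {m n : ℕ} (e : Fin m ≃ S) (a b : Fin n → α) :
    Set.range (Unfold e a b) =
      {p : (Fin n → α) × (Fin n → α) | ∀ i, g (p.1 i) (p.2 i) = g (a i) (b i)} := by
  ext p
  constructor
  · rintro ⟨I, rfl⟩ i
    exact hreg.1 (e (I i)) (e (I i)).2 (a i) (b i)
  · intro hp
    choose s hs _ using fun i => hreg.2 (a i) (b i) (p.1 i) (p.2 i) (hp i).symm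
    refine ⟨fun i => e.symm (s i), ?_⟩
    have h1 : ∀ i, ((s i : Equiv.Perm α × Equiv.Perm α).1 (a i)) = p.1 i :=
      fun i => congrArg Prod.fst (hs i)
    have h2 : ∀ i, ((s i : Equiv.Perm α × Equiv.Perm α).2 (b i)) = p.2 i :=
      fun i => congrArg Prod.snd (hs i)
    unfold Unfold
    ext i <;> simp [h1, h2]
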